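/- Fix ℓ ≥ 1 and m ≥ 1, and let f₀ : ℕ → ℚ be the sequence with f₀(ℓ+1) = 0 and f₀(j) = 1 for all j ≥ 1 with j ≠ ℓ + 1. Then for every n ≥ 0, the m-th invert transform of f₀ satisfies (𝒴^m f₀)(n+1) = Σ_{k=1}^{n+1} ( Σ_{κ=0}^{k−1, (ℓ+1)κ ≤ n} (−1)^κ · C(k, κ) · C(n − (ℓ+1)κ, k − κ − 1) + (−1)^k · δ_{n+1, (ℓ+1)k} ) · m^(k−1), where δ is the Kronecker delta. (This number counts the words of length n over the alphabet {0, 1, …, m} avoiding maximal runs of exactly ℓ zeros.) -/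

import Mathlib

/-- The invert transform of a sequence `x : ℕ → ℚ` (indexed from 1, `x 0` ignored):
`(𝒴x)(0) = 0` and `(𝒴x)(n) = x n + ∑_{j=1}^{n-1} x j * (𝒴x)(n-j)` for `n ≥ 1`. -/
def invert (x : ℕ → ℚ) : ℕ → ℚ
  | 0 => 0
  | n + 1 => x (n + 1) + ∑ j ∈ Finset.range n, x (j + 1) * invert x (n - j)
  termination_by n => n
  decreasing_by omega

/-- The partial Bell polynomial `B_{n,k}(z₁, z₂, …)`, evaluated at a sequence of rationals
`z` (indexed from 1, `z 0` ignored): the sum over all finitely supported `α : ℕ → ℕ` with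
`α 0 = 0`, `∑ i, α i = k` and `∑ i, i * α i = n` of `(n! / ∏ i, (α i)!) * ∏ i (z i / i!)^(α i)`. -/
def partialBell (n k : ℕ) (z : ℕ → ℚ) : ℚ :=
  ∑ α ∈ ((Finset.range (n + 1)).finsuppAntidiag k).filter
      (fun α => (∑ i ∈ Finset.range (n + 1), i * α i) = n ∧ α 0 = 0),
    ((n.factorial : ℚ) / ∏ i ∈ Finset.range (n + 1), ((α i).factorial : ℚ)) *
      ∏ i ∈ Finset.range (n + 1), (z i / (i.factorial : ℚ)) ^ α i

open PowerSeries Finset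

noncomputable def Fser (x : ℕ → ℚ) : PowerSeries ℚ :=
  PowerSeries.X * PowerSeries.mk (fun n => x (n + 1))

lemma coeff_Fser (x : ℕ → ℚ) (n : ℕ) :
    PowerSeries.coeff n (Fser x) = if n = 0 then 0 else x n := by
  cases n with
  | zero => simp [Fser]
  | succ n => simp [Fser, PowerSeries.coeff_succ_X_mul]

lemma invert_key (x : ℕ → ℚ) :
    (1 - Fser x) * PowerSeries.mk (invert x) = Fser x := by
  ext N
  rw [PowerSeries.coeff_mul, Finset.Nat.sum_antidiagonal_eq_sum_range_succ_mk]
  cases N with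
  | zero => simp [invert, coeff_Fser]
  | succ N =>
    rw [Finset.sum_range_succ']
    simp only [map_sub, PowerSeries.coeff_one, coeff_Fser, PowerSeries.coeff_mk]
    rw [Finset.sum_range_succ]
    have h0 : invert x 0 = 0 := by rw [invert]
    have h1 : invert x (N+1) = x (N + 1) + ∑ j ∈ Finset.range N, x (j + 1) * invert x (N - j) := by
      rw [invert]
    simp only [Nat.succ_ne_zero, if_false, Nat.sub_self, Nat.succ_sub_succ, Nat.sub_zero,
      if_true, h0, mul_zero, add_zero, zero_sub, sub_zero, neg_mul, one_mul]
    rw [h1]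
    rw [Finset.sum_neg_distrib]
    ring

lemma invert_zero_eq (x : ℕ → ℚ) : invert x 0 = 0 := by rw [invert]

lemma mk_eq_Fser_of_zero (y : ℕ → ℚ) (hy : y 0 = 0) : PowerSeries.mk y = Fser y := by
  ext n
  rw [coeff_Fser, PowerSeries.coeff_mk]
  split
  · next h => rw [h, hy]
  · rfl

lemma iter_key (x : ℕ → ℚ) (m : ℕ) (hm : 1 ≤ m) :
    (1 - (m : PowerSeries ℚ) * Fser x) * PowerSeries.mk (invert^[m] x) = Fser x := by
  induction m with
  | zero => omega
  | succ m ih =>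
    rcases Nat.eq_zero_or_pos m with h | h
    · subst h
      simpa using invert_key x
    · have h1 := ih h
      have h2 : (1 - PowerSeries.mk (invert^[m] x)) * PowerSeries.mk (invert^[m+1] x)
          = PowerSeries.mk (invert^[m] x) := by
        rw [Function.iterate_succ_apply']
        have hz : (invert^[m] x) 0 = 0 := by
          obtain ⟨m', rfl⟩ := Nat.exists_eq_add_of_le h
          rw [add_comm, Function.iterate_succ_apply']
          exact invert_zero_eq _
        rw [mk_eq_Fser_of_zero _ hz]
        exact invert_key _
      push_cast
      linear_combination (PowerSeries.mk (invert^[m+1] x) + 1) * h1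
        + (1 - (m : PowerSeries ℚ) * Fser x) * h2

lemma Fser_f0 (ℓ : ℕ) (f₀ : ℕ → ℚ)
    (hf : ∀ j, 1 ≤ j → f₀ j = if j = ℓ + 1 then 0 else 1) :
    Fser f₀ = PowerSeries.X * (PowerSeries.invOneSubPow ℚ 1).val
      - PowerSeries.X ^ (ℓ + 1) := by
  ext n
  rw [coeff_Fser]
  cases n with
  | zero =>
    simp [PowerSeries.invOneSubPow_val_succ_eq_mk_add_choose, PowerSeries.coeff_X_pow]
  | succ n =>
    rw [map_sub, PowerSeries.coeff_succ_X_mul,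
      PowerSeries.invOneSubPow_val_succ_eq_mk_add_choose, PowerSeries.coeff_mk,
      PowerSeries.coeff_X_pow, hf (n+1) (by omega)]
    by_cases h : n + 1 = ℓ + 1 <;> simp [h] <;> simp [show n ≠ ℓ by omega]

lemma invOneSubPow_pow (d : ℕ) :
    (PowerSeries.invOneSubPow ℚ 1) ^ d = PowerSeries.invOneSubPow ℚ d := by
  rw [PowerSeries.invOneSubPow_eq_inv_one_sub_pow (S := ℚ) (d := 1),
    PowerSeries.invOneSubPow_eq_inv_one_sub_pow (S := ℚ) (d := d), pow_one]

lemma coeff_pow_f0 (ℓ : ℕ) (f₀ : ℕ → ℚ)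
    (hf : ∀ j, 1 ≤ j → f₀ j = if j = ℓ + 1 then 0 else 1) (n K : ℕ) (hK : 1 ≤ K) :
    PowerSeries.coeff (n + 1) ((Fser f₀) ^ K)
      = (∑ κ ∈ (Finset.range K).filter (fun κ => (ℓ + 1) * κ ≤ n),
          (-1 : ℚ) ^ κ * (K.choose κ : ℚ) * ((n - (ℓ + 1) * κ).choose (K - κ - 1) : ℚ))
        + (if n + 1 = (ℓ + 1) * K then (-1 : ℚ) ^ K else 0) := by
  rw [Fser_f0 ℓ f₀ hf, sub_eq_add_neg,
    show PowerSeries.X * (PowerSeries.invOneSubPow ℚ 1).val + -PowerSeries.X ^ (ℓ + 1)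
      = -PowerSeries.X ^ (ℓ + 1) + PowerSeries.X * (PowerSeries.invOneSubPow ℚ 1).val
      from add_comm _ _, add_pow]
  rw [map_sum, Finset.sum_range_succ]
  congr 1
  · -- κ < K terms
    rw [Finset.sum_filter]
    refine Finset.sum_congr rfl fun κ hκ => ?_
    rw [Finset.mem_range] at hκ
    have hterm : (-PowerSeries.X ^ (ℓ + 1)) ^ κ
          * (PowerSeries.X * (PowerSeries.invOneSubPow ℚ 1).val) ^ (K - κ)
          * (K.choose κ : PowerSeries ℚ)
        = ((-1 : ℚ) ^ κ * (K.choose κ : ℚ)) •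
          (PowerSeries.X ^ ((K - κ) + (ℓ + 1) * κ) * (PowerSeries.invOneSubPow ℚ (K - κ)).val) := by
      rw [PowerSeries.smul_eq_C_mul, map_mul, map_pow, map_neg, map_one, map_natCast,
        mul_pow, neg_pow, ← pow_mul, ← Units.val_pow_eq_pow_val, invOneSubPow_pow]
      ring
    rw [hterm, map_smul, smul_eq_mul, PowerSeries.coeff_X_pow_mul',
      PowerSeries.invOneSubPow_val_eq_mk_sub_one_add_choose_of_pos (S := ℚ) (d := K - κ)
        (by omega : 0 < K - κ),
      PowerSeries.coeff_mk]
    by_cases h1 : (ℓ + 1) * κ ≤ n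
    · rw [if_pos h1]
      by_cases h2 : (K - κ) + (ℓ + 1) * κ ≤ n + 1
      · rw [if_pos h2]
        have he : (K - κ - 1 + (n + 1 - (K - κ + (ℓ + 1) * κ))) = n - (ℓ + 1) * κ := by omega
        rw [he, mul_assoc]
      · rw [if_neg h2,
          Nat.choose_eq_zero_of_lt (show n - (ℓ + 1) * κ < K - κ - 1 by omega),
          Nat.cast_zero, mul_zero]
    · rw [if_neg h1, if_neg (by omega), mul_zero]
  · -- κ = K term
    have : (-PowerSeries.X ^ (ℓ + 1)) ^ K
          * (PowerSeries.X * (PowerSeries.invOneSubPow ℚ 1).val) ^ (K - K)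
          * (K.choose K : PowerSeries ℚ)
        = ((-1 : ℚ) ^ K) • (PowerSeries.X ^ ((ℓ + 1) * K)) := by
      rw [PowerSeries.smul_eq_C_mul, map_pow, map_neg, map_one, Nat.sub_self, pow_zero,
        mul_one, neg_pow, ← pow_mul, Nat.choose_self, Nat.cast_one, mul_one]
    rw [this, map_smul, PowerSeries.coeff_X_pow, smul_eq_mul]
    by_cases h : n + 1 = (ℓ + 1) * K <;> simp [h, eq_comm]

lemma geom_trunc (V F u : PowerSeries ℚ) (h : (1 - u) * V = F) (N : ℕ) :
    V = (∑ k ∈ Finset.range (N + 1), F * u ^ k) + u ^ (N + 1) * V := by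
  induction N with
  | zero =>
    rw [show (0:ℕ) + 1 = 1 from rfl, Finset.range_one, Finset.sum_singleton, pow_zero,
      mul_one, pow_one]
    linear_combination h
  | succ N ih =>
    rw [Finset.sum_range_succ]
    linear_combination ih + u ^ (N + 1) * h

theorem stmt_11 (ℓ m : ℕ) (hℓ : 1 ≤ ℓ) (hm : 1 ≤ m) (f₀ : ℕ → ℚ)
    (hf : ∀ j, 1 ≤ j → f₀ j = if j = ℓ + 1 then 0 else 1) (n : ℕ) :
    (invert^[m] f₀) (n + 1)
      = ∑ k ∈ Finset.Icc 1 (n + 1),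
          ((∑ κ ∈ (Finset.range k).filter (fun κ => (ℓ + 1) * κ ≤ n),
              (-1 : ℚ) ^ κ * (k.choose κ : ℚ) * ((n - (ℓ + 1) * κ).choose (k - κ - 1) : ℚ))
            + (if n + 1 = (ℓ + 1) * k then (-1 : ℚ) ^ k else 0)) * (m : ℚ) ^ (k - 1) := by
  have hiter := iter_key f₀ m hm
  set F := Fser f₀ with hF
  set u := (m : PowerSeries ℚ) * F with hu
  have hgeom := geom_trunc (PowerSeries.mk (invert^[m] f₀)) F u hiter (n + 1)
  have hcoeff : (invert^[m] f₀) (n + 1)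
      = PowerSeries.coeff (n + 1) (PowerSeries.mk (invert^[m] f₀)) := by
    rw [PowerSeries.coeff_mk]
  rw [hcoeff, hgeom, map_add, map_sum]
  -- remainder term vanishes
  have hrem : u ^ (n + 2) * PowerSeries.mk (invert^[m] f₀)
      = PowerSeries.X ^ (n + 2) * ((m : PowerSeries ℚ) ^ (n + 2)
        * (PowerSeries.mk (fun j => f₀ (j + 1))) ^ (n + 2) * PowerSeries.mk (invert^[m] f₀)) := by
    rw [hu, hF]
    unfold Fser
    ring
  rw [hrem, PowerSeries.coeff_X_pow_mul', if_neg (by omega), add_zero]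
  -- each summand
  have hsummand : ∀ k, F * u ^ k = ((m : ℚ) ^ k) • (F ^ (k + 1)) := by
    intro k
    rw [PowerSeries.smul_eq_C_mul, map_pow, map_natCast, hu]
    ring
  have hterm : ∀ k ∈ Finset.range (n + 2),
      PowerSeries.coeff (n + 1) (F * u ^ k)
      = (m : ℚ) ^ k * ((∑ κ ∈ (Finset.range (k+1)).filter (fun κ => (ℓ + 1) * κ ≤ n),
          (-1 : ℚ) ^ κ * ((k+1).choose κ : ℚ) * ((n - (ℓ + 1) * κ).choose (k + 1 - κ - 1) : ℚ))
        + (if n + 1 = (ℓ + 1) * (k+1) then (-1 : ℚ) ^ (k+1) else 0)) := by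
    intro k _
    rw [hsummand k, map_smul, smul_eq_mul, coeff_pow_f0 ℓ f₀ hf n (k+1) (by omega)]
  rw [Finset.sum_congr rfl hterm, Finset.sum_range_succ]
  -- last term (k = n+1) vanishes
  have hlast : PowerSeries.coeff (n + 1) (F ^ (n + 2)) = 0 := by
    have : F ^ (n + 2) = PowerSeries.X ^ (n + 2) * (PowerSeries.mk (fun j => f₀ (j + 1))) ^ (n + 2) := by
      rw [hF]; unfold Fser; ring
    rw [this, PowerSeries.coeff_X_pow_mul', if_neg (by omega)]
  have hlast' : ((∑ κ ∈ (Finset.range (n+2)).filter (fun κ => (ℓ + 1) * κ ≤ n),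
          (-1 : ℚ) ^ κ * ((n+2).choose κ : ℚ) * ((n - (ℓ + 1) * κ).choose (n + 2 - κ - 1) : ℚ))
        + (if n + 1 = (ℓ + 1) * (n+2) then (-1 : ℚ) ^ (n+2) else 0)) = 0 := by
    have := coeff_pow_f0 ℓ f₀ hf n (n + 2) (by omega)
    rw [hlast] at this
    exact this.symm
  rw [hlast', mul_zero, add_zero]
  refine Finset.sum_nbij' (fun k => k + 1) (fun k => k - 1) ?_ ?_ ?_ ?_ ?_
  · intro a ha
    simp only [Finset.mem_range] at ha
    simp only [Finset.mem_Icc]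
    omega
  · intro a ha
    simp only [Finset.mem_Icc] at ha
    simp only [Finset.mem_range]
    omega
  · intro a ha
    simp only [Finset.mem_range] at ha
    omega
  · intro a ha
    simp only [Finset.mem_Icc] at ha
    omega
  · intro k _
    simp only [Nat.add_sub_cancel]
    ring
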